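/- Suppose V : ℝⁿ → ℝ is continuously differentiable, f : ℝⁿ → ℝⁿ is Lipschitz, and for every x with V(x) = 0 we have ⟨∇V(x), f(x)⟩ > 0. Then the set {x : V(x) ≥ 0} is forward invariant under the flow of ẋ = f(x): any solution x(t) with V(x(0)) ≥ 0 satisfies V(x(t)) ≥ 0 for all t ≥ 0 in its interval of existence. -/

import Mathlib

open RealInnerProductSpace Topology Filter

/-- barrier-certificate forward invariance. If `V` is C¹, `f` is
Lipschitz, and `⟨∇V(x), f(x)⟩ > 0` whenever `V(x) = 0`, then the superlevel set
`{V ≥ 0}` is forward invariant: any solution of `ẋ = f(x)` on `[0,T]` with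
`V(x(0)) ≥ 0` satisfies `V(x(t)) ≥ 0` for all `t ∈ [0,T]`. -/
theorem barrier_forward_invariance {n : ℕ} {K : NNReal}
    (V : EuclideanSpace ℝ (Fin n) → ℝ) (hV : ContDiff ℝ 1 V)
    (f : EuclideanSpace ℝ (Fin n) → EuclideanSpace ℝ (Fin n))
    (hf : LipschitzWith K f)
    (hbarrier : ∀ x, V x = 0 → 0 < ⟪gradient V x, f x⟫)
    (T : ℝ) (x : ℝ → EuclideanSpace ℝ (Fin n))
    (hx : ∀ t ∈ Set.Icc (0 : ℝ) T, HasDerivAt x (f (x t)) t)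
    (h0 : 0 ≤ V (x 0)) :
    ∀ t ∈ Set.Icc (0 : ℝ) T, 0 ≤ V (x t) := by
  by_contra hcon
  push_neg at hcon
  obtain ⟨t₁, ht₁, hneg⟩ := hcon
  set g : ℝ → ℝ := fun t => V (x t) with hg
  have hderiv : ∀ t ∈ Set.Icc (0:ℝ) T,
      HasDerivAt g (⟪gradient V (x t), f (x t)⟫) t := by
    intro t ht
    have h1 : HasGradientAt V (gradient V (x t)) (x t) :=
      (hV.differentiable one_ne_zero (x t)).hasGradientAt
    have h2 := h1.hasFDerivAt.comp_hasDerivAt t (hx t ht)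
    simpa [Function.comp_def] using h2
  have hcont : ∀ t ∈ Set.Icc (0:ℝ) T, ContinuousAt g t := fun t ht =>
    (hV.continuous.continuousAt).comp (hx t ht).continuousAt
  set S := {t | t ∈ Set.Icc (0:ℝ) t₁ ∧ 0 ≤ g t} with hS
  have h0S : (0:ℝ) ∈ S := ⟨⟨le_refl 0, ht₁.1⟩, h0⟩
  have hSne : S.Nonempty := ⟨0, h0S⟩
  have hSbdd : BddAbove S := ⟨t₁, fun t ht => ht.1.2⟩
  set t₀ := sSup S with ht₀
  have ht₀mem : t₀ ∈ Set.Icc (0:ℝ) t₁ :=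
    ⟨le_csSup hSbdd h0S, csSup_le hSne fun t ht => ht.1.2⟩
  have ht₀T : t₀ ∈ Set.Icc (0:ℝ) T := ⟨ht₀mem.1, le_trans ht₀mem.2 ht₁.2⟩
  have hclos : t₀ ∈ closure S := csSup_mem_closure hSne hSbdd
  have hneS : (𝓝[S] t₀).NeBot := mem_closure_iff_nhdsWithin_neBot.mp hclos
  have hg₀nonneg : 0 ≤ g t₀ := by
    refine ge_of_tendsto ((hcont t₀ ht₀T).continuousWithinAt (s := S)) ?_
    exact eventually_mem_nhdsWithin.mono fun s hs => hs.2
  have ht₀lt : t₀ < t₁ := by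
    rcases lt_or_eq_of_le ht₀mem.2 with h | h
    · exact h
    · exfalso; rw [h] at hg₀nonneg; exact absurd hneg (not_lt.mpr hg₀nonneg)
  have hright : ∀ t ∈ Set.Ioo t₀ t₁, g t < 0 := by
    intro t ht
    by_contra h
    push_neg at h
    have htS : t ∈ S := ⟨⟨le_trans ht₀mem.1 ht.1.le, ht.2.le⟩, h⟩
    exact absurd (le_csSup hSbdd htS) (not_le.mpr ht.1)
  have hg₀nonpos : g t₀ ≤ 0 := by
    have htend : Filter.Tendsto g (𝓝[>] t₀) (𝓝 (g t₀)) :=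
      (hcont t₀ ht₀T).continuousWithinAt
    refine le_of_tendsto htend ?_
    filter_upwards [Ioo_mem_nhdsGT_of_mem ⟨le_refl t₀, ht₀lt⟩] with t ht
    exact (hright t ht).le
  have hgz : g t₀ = 0 := le_antisymm hg₀nonpos hg₀nonneg
  have hdpos : 0 < ⟪gradient V (x t₀), f (x t₀)⟫ := hbarrier _ hgz
  have hd := hderiv t₀ ht₀T
  rw [hasDerivAt_iff_tendsto_slope] at hd
  have hd' : Filter.Tendsto (slope g t₀) (𝓝[>] t₀)
      (𝓝 (⟪gradient V (x t₀), f (x t₀)⟫)) :=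
    hd.mono_left (nhdsWithin_mono _ fun y hy => ne_of_gt hy)
  have hev1 : ∀ᶠ t in 𝓝[>] t₀, 0 < slope g t₀ t :=
    hd'.eventually (eventually_gt_nhds hdpos)
  have hev2 : Set.Ioo t₀ t₁ ∈ 𝓝[>] t₀ :=
    Ioo_mem_nhdsGT_of_mem ⟨le_refl t₀, ht₀lt⟩
  obtain ⟨t, hslope, htIoo⟩ := (hev1.and (Filter.eventually_of_mem hev2 fun a ha => ha)).exists
  rw [slope_def_field] at hslope
  have h1 : (0:ℝ) < t - t₀ := sub_pos.mpr htIoo.1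
  have h2 : 0 < g t - g t₀ := by
    have := mul_pos hslope h1
    rwa [div_mul_cancel₀ _ h1.ne'] at this
  have hgt : 0 < g t := by rw [hgz] at h2; linarith
  have htS : t ∈ S := ⟨⟨le_trans ht₀mem.1 htIoo.1.le, htIoo.2.le⟩, hgt.le⟩
  have := le_csSup hSbdd htS
  exact absurd this (not_le.mpr htIoo.1)
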